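/- Let 0 < α < 1 and let f_α(x|t) be the scaled stable density. For μ, λ > 0 define m_α(x|μ,λ) = (λ^μ/Γ(μ)) ∫₀^∞ f_α(x|t) t^{μ-1} e^{-λ t} dt. Then the Laplace transform satisfies ∫₀^∞ e^{-sx} x m_α(x|μ,λ) dx = λ^μ μ α s^{α-1}/(λ+s^α)^{μ+1} for s > 0. -/

import Mathlib

open MeasureTheory Set Real Filter

lemma integrableOn_of_setIntegral_ne_zero {f : ℝ → ℝ} {s : Set ℝ}
    (h : (∫ x in s, f x) ≠ 0) : IntegrableOn f s := by
  by_contra hc; exact h (integral_undef hc)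

lemma mul_exp_neg_le {c : ℝ} (hc : 0 < c) (t : ℝ) :
    t * Real.exp (-(c * t)) ≤ 1 / c := by
  have h1 : c * t ≤ Real.exp (c * t) := le_trans (by linarith) (Real.add_one_le_exp _)
  rw [le_div_iff₀ hc, Real.exp_neg, mul_comm t, mul_assoc, inv_mul_le_iff₀ (Real.exp_pos _)]
  linarith

lemma laplace_deriv {α : ℝ} {g : ℝ → ℝ} (hg_meas : Measurable g)
    (hg_nonneg : ∀ y, 0 ≤ g y)
    (hg_lt : ∀ s > (0:ℝ), ∫ t in Ioi (0:ℝ), Real.exp (-(s*t)) * g t = Real.exp (-(s^α))) :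
    ∀ s > (0:ℝ), IntegrableOn (fun t => t * Real.exp (-(s*t)) * g t) (Ioi 0) ∧
      ∫ t in Ioi (0:ℝ), t * Real.exp (-(s*t)) * g t = α * s^(α-1) * Real.exp (-(s^α)) := by
  intro s hs
  have hint : ∀ u > (0:ℝ), IntegrableOn (fun t => Real.exp (-(u*t)) * g t) (Ioi 0) := by
    intro u hu
    apply integrableOn_of_setIntegral_ne_zero
    rw [hg_lt u hu]
    exact (Real.exp_pos _).ne'
  have key := hasDerivAt_integral_of_dominated_loc_of_deriv_le
    (F := fun u t => Real.exp (-(u*t)) * g t)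
    (F' := fun u t => -(t * Real.exp (-(u*t)) * g t))
    (x₀ := s) (s := Metric.ball s (s/2)) (μ := volume.restrict (Ioi (0:ℝ)))
    (bound := fun t => (4/s) * (Real.exp (-(s/4*t)) * g t))
    (Metric.ball_mem_nhds _ (by positivity))
    (Eventually.of_forall fun u =>
      (((measurable_exp.comp ((measurable_id.const_mul u).neg)).mul hg_meas).aestronglyMeasurable))
    (hint s hs)
    ((((measurable_id.mul (measurable_exp.comp ((measurable_id.const_mul s).neg))).mul
      hg_meas).neg).aestronglyMeasurable)
    ?_ ((hint (s/4) (by positivity)).const_mul _)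
    (Eventually.of_forall fun t => fun u _ => ?_)
  · obtain ⟨hi, hd⟩ := key
    have hint2 : IntegrableOn (fun t => t * Real.exp (-(s*t)) * g t) (Ioi 0) := by
      have h := hi.neg
      simp only [Pi.neg_def, neg_neg] at h
      exact h
    refine ⟨hint2, ?_⟩
    have h1 : HasDerivAt (fun u:ℝ => u ^ α) (α * s^(α-1)) s :=
      Real.hasDerivAt_rpow_const (Or.inl hs.ne')
    have h2 : HasDerivAt (fun u:ℝ => Real.exp (-(u^α)))
        (Real.exp (-(s^α)) * (-(α * s^(α-1)))) s := h1.neg.exp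
    have heq : (fun u:ℝ => Real.exp (-(u^α))) =ᶠ[nhds s]
        (fun u => ∫ t in Ioi (0:ℝ), Real.exp (-(u*t)) * g t) := by
      filter_upwards [eventually_gt_nhds hs] with u hu
      exact (hg_lt u hu).symm
    have h3 : HasDerivAt (fun u:ℝ => Real.exp (-(u^α)))
        (∫ t in Ioi (0:ℝ), -(t * Real.exp (-(s*t)) * g t)) s :=
      hd.congr_of_eventuallyEq heq
    have h4 := h3.unique h2
    rw [integral_neg] at h4
    have h5 : ∫ t in Ioi (0:ℝ), t * Real.exp (-(s*t)) * g t
        = Real.exp (-(s^α)) * (α * s^(α-1)) := by linarith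
    rw [h5]; ring
  · filter_upwards [ae_restrict_mem measurableSet_Ioi] with t ht u hu
    rw [Metric.mem_ball, Real.dist_eq, abs_lt] at hu
    have ht' : (0:ℝ) < t := ht
    have hb1 : Real.exp (-(u*t)) ≤ Real.exp (-(s/2*t)) := by
      apply Real.exp_le_exp.mpr
      nlinarith
    have hb2 : t * Real.exp (-(s/4*t)) ≤ 4/s := by
      have h := mul_exp_neg_le (c := s/4) (by positivity) t
      rw [div_div_eq_mul_div, one_mul] at h
      exact h
    have hn : ‖-(t * Real.exp (-(u*t)) * g t)‖ = t * Real.exp (-(u*t)) * g t := by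
      rw [norm_neg, Real.norm_eq_abs,
        abs_of_nonneg (mul_nonneg (mul_nonneg ht'.le (Real.exp_pos _).le) (hg_nonneg t))]
    rw [hn]
    have hs2 : Real.exp (-(s/2*t)) = Real.exp (-(s/4*t)) * Real.exp (-(s/4*t)) := by
      rw [← Real.exp_add]; ring_nf
    calc t * Real.exp (-(u*t)) * g t ≤ t * Real.exp (-(s/2*t)) * g t := by
          apply mul_le_mul_of_nonneg_right _ (hg_nonneg t)
          exact mul_le_mul_of_nonneg_left hb1 ht'.le
      _ = (t * Real.exp (-(s/4*t))) * (Real.exp (-(s/4*t)) * g t) := by rw [hs2]; ring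
      _ ≤ (4/s) * (Real.exp (-(s/4*t)) * g t) := by
          apply mul_le_mul_of_nonneg_right hb2
            (mul_nonneg (Real.exp_pos _).le (hg_nonneg t))
  · have h5 : HasDerivAt (fun u:ℝ => -(u*t)) (-t) u := by
      exact (((hasDerivAt_id u).mul_const t).neg).congr_deriv (by ring)
    have h6 := (h5.exp).mul_const (g t)
    exact h6.congr_deriv (by ring)

theorem laplace_gamma_mixture (α μ lam : ℝ) (hα : 0 < α) (hα1 : α < 1)
    (hμ : 0 < μ) (hlam : 0 < lam) (f : ℝ → ℝ)
    (hf_nonneg : ∀ x > (0 : ℝ), 0 ≤ f x)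
    (hf_prob : ∫ x in Set.Ioi (0 : ℝ), f x = 1)
    (hf_lt : ∀ s > (0 : ℝ),
      ∫ t in Set.Ioi (0 : ℝ), Real.exp (-(s * t)) * f t = Real.exp (-(s ^ α))) :
    ∀ s > (0 : ℝ),
      ∫ x in Set.Ioi (0 : ℝ),
          Real.exp (-(s * x)) *
            (x * (lam ^ μ / Real.Gamma μ *
              ∫ t in Set.Ioi (0 : ℝ),
                f (x * t ^ (-(1 / α))) * t ^ (-(1 / α)) * t ^ (μ - 1) *
                  Real.exp (-(lam * t)))) =
        lam ^ μ * μ * α * s ^ (α - 1) / (lam + s ^ α) ^ (μ + 1) := by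
  intro s hs
  have hΓ : 0 < Real.Gamma μ := Real.Gamma_pos_of_pos hμ
  have hc' : 0 < lam + s ^ α := by positivity
  set C : ℝ := lam ^ μ / Real.Gamma μ with hCdef
  have hC : 0 < C := div_pos (Real.rpow_pos_of_pos hlam μ) hΓ
  -- measurable nonnegative representative of f on Ioi 0
  have hf_int : IntegrableOn f (Ioi 0) :=
    integrableOn_of_setIntegral_ne_zero (by rw [hf_prob]; norm_num)
  obtain ⟨g0, hg0_meas, hfg0⟩ := hf_int.aestronglyMeasurable
  set g' : ℝ → ℝ := fun y => if 0 < y then max (g0 y) 0 else 0 with hg'def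
  have hg'_meas : Measurable g' := by
    apply Measurable.ite
    · exact measurableSet_Ioi
    · exact hg0_meas.measurable.max measurable_const
    · exact measurable_const
  have hg'_nonneg : ∀ y, 0 ≤ g' y := by
    intro y
    by_cases h : 0 < y <;> simp [hg'def, h]
  have hfg' : f =ᵐ[volume.restrict (Ioi (0:ℝ))] g' := by
    filter_upwards [hfg0, ae_restrict_mem measurableSet_Ioi] with y h1 h2
    have hy : (0:ℝ) < y := h2
    simp only [hg'def, if_pos hy]
    rw [← h1, max_eq_left (hf_nonneg y hy)]
  have hg'_lt : ∀ u > (0:ℝ),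
      ∫ t in Ioi (0:ℝ), Real.exp (-(u*t)) * g' t = Real.exp (-(u^α)) := by
    intro u hu
    rw [← hf_lt u hu]
    apply integral_congr_ae
    filter_upwards [hfg'] with t ht
    rw [ht]
  have hLD := laplace_deriv hg'_meas hg'_nonneg hg'_lt
  -- null set where f and g' differ
  have hN0 : volume ({z : ℝ | f z ≠ g' z} ∩ Ioi 0) = 0 := by
    have h := hfg'
    rw [Filter.EventuallyEq, ae_iff, Measure.restrict_apply' measurableSet_Ioi] at h
    exact h
  have hpre : ∀ x : ℝ, 0 < x →
      (∀ᵐ y ∂(volume.restrict (Ioi (0:ℝ))), f (x*y) = g' (x*y)) := by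
    intro x hx
    set N := toMeasurable volume ({z : ℝ | f z ≠ g' z} ∩ Ioi 0) with hNdef
    have hNm : MeasurableSet N := measurableSet_toMeasurable _ _
    have hN : volume N = 0 := by rw [measure_toMeasurable]; exact hN0
    have hB : volume ((fun y => x*y) ⁻¹' N) = 0 := by
      have hmap : Measure.map (fun y => x*y) volume N
          = ENNReal.ofReal |x⁻¹| * volume N := by
        rw [Real.map_volume_mul_left (ne_of_gt hx)]
        simp [Measure.smul_apply, smul_eq_mul]
      rw [Measure.map_apply (measurable_const_mul x) hNm] at hmap
      rw [hmap, hN, mul_zero]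
    have hBae : ∀ᵐ y ∂volume, y ∉ (fun y => x*y) ⁻¹' N :=
      measure_eq_zero_iff_ae_notMem.mp hB
    filter_upwards [ae_restrict_of_ae hBae, ae_restrict_mem measurableSet_Ioi] with y hy hy'
    by_contra hne
    exact hy (subset_toMeasurable volume _ ⟨hne, mul_pos hx hy'⟩)
  -- definitions
  set Ψ : ℝ → ℝ := fun y => C * α * y ^ (-(α*μ)) * Real.exp (-(lam * y ^ (-α))) with hΨdef
  set P : ℝ → ℝ → ℝ := fun x y => Real.exp (-(s*x)) * x * g' (x*y) * Ψ y with hPdef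
  have hΨ_nonneg : ∀ y ∈ Ioi (0:ℝ), 0 ≤ Ψ y := by
    intro y hy
    have hy' : (0:ℝ) < y := hy
    have := Real.rpow_pos_of_pos hy' (-(α*μ))
    positivity
  -- integrability of the x-section
  have hcore_int : ∀ y : ℝ, 0 < y →
      IntegrableOn (fun x => Real.exp (-(s*x)) * x * g' (x*y)) (Ioi 0) := by
    intro y hy
    have h1 := (hLD (s/y) (by positivity)).1
    have h2 : IntegrableOn
        (fun x => (x*y) * Real.exp (-(s/y*(x*y))) * g' (x*y)) (Ioi 0) := by
      have h3 := (integrableOn_Ioi_comp_mul_right_iff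
        (fun u => u * Real.exp (-(s/y*u)) * g' u) 0 hy).mpr
      rw [zero_mul] at h3
      exact h3 h1
    have h4 : IntegrableOn
        (fun x => y⁻¹ * ((x*y) * Real.exp (-(s/y*(x*y))) * g' (x*y))) (Ioi 0) :=
      h2.const_mul y⁻¹
    apply h4.congr_fun _ measurableSet_Ioi
    intro x hx
    have harg : s/y*(x*y) = s*x := by field_simp
    simp only
    rw [harg]
    field_simp
    try ring
  -- value of the x-section integral
  have hcompute_x : ∀ y : ℝ, 0 < y →
      (∫ x in Ioi (0:ℝ), Real.exp (-(s*x)) * x * g' (x*y))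
        = y⁻¹ * (y⁻¹ * (α * (s/y)^(α-1) * Real.exp (-((s/y)^α)))) := by
    intro y hy
    have hsy : 0 < s/y := by positivity
    have hstep : (∫ x in Ioi (0:ℝ), Real.exp (-(s*x)) * x * g' (x*y))
        = ∫ x in Ioi (0:ℝ),
            (fun u => Real.exp (-(s/y*u)) * (u * y⁻¹) * g' u) (x*y) := by
      apply setIntegral_congr_fun measurableSet_Ioi
      intro x hx
      simp only
      have harg : s/y*(x*y) = s*x := by field_simp
      rw [harg]
      field_simp
      try ring
    have hmr := integral_comp_mul_right_Ioi
      (fun u => Real.exp (-(s/y*u)) * (u * y⁻¹) * g' u) 0 hy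
    rw [zero_mul] at hmr
    have hstep2 : (∫ u in Ioi (0:ℝ), Real.exp (-(s/y*u)) * (u * y⁻¹) * g' u)
        = y⁻¹ * ∫ u in Ioi (0:ℝ), u * Real.exp (-(s/y*u)) * g' u := by
      rw [← integral_const_mul]
      apply setIntegral_congr_fun measurableSet_Ioi
      intro u hu
      ring
    rw [hstep, hmr, smul_eq_mul, hstep2, (hLD (s/y) hsy).2]
  -- the y-section algebra
  set K : ℝ := C * (α*α) * s^(α-1) with hKdef
  have halg : ∀ y : ℝ, 0 < y →
      (y⁻¹ * (y⁻¹ * (α * (s/y)^(α-1) * Real.exp (-((s/y)^α))))) * Ψ y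
        = K * (y ^ (-(α*μ)-α-1) * Real.exp (-((lam + s^α) * y^(-α)))) := by
    intro y hy
    have hsy1 : (s/y)^(α-1) = s^(α-1) * y^(-(α-1)) := by
      rw [div_eq_mul_inv, Real.mul_rpow hs.le (inv_nonneg.mpr hy.le),
        Real.inv_rpow hy.le, ← Real.rpow_neg hy.le]
    have hsy2 : (s/y)^α = s^α * y^(-α) := by
      rw [div_eq_mul_inv, Real.mul_rpow hs.le (inv_nonneg.mpr hy.le),
        Real.inv_rpow hy.le, ← Real.rpow_neg hy.le]
    have hexp : Real.exp (-(lam * y^(-α))) * Real.exp (-(s^α * y^(-α)))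
        = Real.exp (-((lam + s^α) * y^(-α))) := by
      rw [← Real.exp_add]; congr 1; ring
    have hpw : y^(-(α*μ)) * y⁻¹ * y⁻¹ * y^(-(α-1)) = y^(-(α*μ)-α-1) := by
      rw [← Real.rpow_neg_one y, ← Real.rpow_add hy, ← Real.rpow_add hy,
        ← Real.rpow_add hy]
      congr 1
      ring
    rw [hsy1, hsy2, hΨdef]
    simp only
    rw [← hexp, ← hpw, hKdef]
    ring
  -- Gamma-type integrand facts
  have hp2 : (-(1/α)) ≠ 0 := neg_ne_zero.mpr (by positivity)
  have hnice_int : IntegrableOn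
      (fun t : ℝ => t ^ (μ+1-1) * Real.exp (-((lam + s^α) * t))) (Ioi 0) := by
    have h := integrableOn_rpow_mul_exp_neg_mul_rpow
      (p := 1) (s := μ+1-1) (b := lam + s^α) (by linarith) zero_lt_one hc'
    apply h.congr_fun _ measurableSet_Ioi
    intro t ht
    simp only [Real.rpow_one, neg_mul]
  have hptwise : ∀ t ∈ Ioi (0:ℝ),
      (|(-(1/α))| * t ^ (-(1/α) - 1)) •
        ((t ^ (-(1/α))) ^ (-(α*μ)-α-1) *
          Real.exp (-((lam + s^α) * (t ^ (-(1/α))) ^ (-α))))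
      = α⁻¹ * (t ^ (μ+1-1) * Real.exp (-((lam + s^α) * t))) := by
    intro t ht
    have ht' : (0:ℝ) < t := ht
    have h1 : (t ^ (-(1/α))) ^ (-(α*μ)-α-1) = t ^ ((-(1/α)) * (-(α*μ)-α-1)) :=
      (Real.rpow_mul ht'.le _ _).symm
    have h2 : (t ^ (-(1/α))) ^ (-α) = t := by
      rw [← Real.rpow_mul ht'.le]
      rw [show (-(1/α)) * (-α) = 1 by field_simp]
      exact Real.rpow_one t
    have habs : |(-(1/α))| = α⁻¹ := by
      rw [abs_neg, abs_of_pos (by positivity), one_div]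
    have h3 : t ^ (-(1/α) - 1) * t ^ ((-(1/α)) * (-(α*μ)-α-1)) = t ^ (μ+1-1) := by
      rw [← Real.rpow_add ht']
      congr 1
      field_simp
      ring
    rw [h1, h2, habs, smul_eq_mul, ← h3]
    ring
  have hGint : IntegrableOn
      (fun y : ℝ => y ^ (-(α*μ)-α-1) * Real.exp (-((lam + s^α) * y ^ (-α)))) (Ioi 0) := by
    rw [← integrableOn_Ioi_comp_rpow_iff _ hp2]
    have hni : IntegrableOn
        (fun t : ℝ => α⁻¹ * (t ^ (μ+1-1) * Real.exp (-((lam + s^α) * t)))) (Ioi 0) :=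
      hnice_int.const_mul α⁻¹
    exact hni.congr_fun (fun t ht => (hptwise t ht).symm) measurableSet_Ioi
  have hGval : (∫ y in Ioi (0:ℝ), y ^ (-(α*μ)-α-1) * Real.exp (-((lam + s^α) * y ^ (-α))))
      = α⁻¹ * ((1/(lam + s^α)) ^ (μ+1) * Real.Gamma (μ+1)) := by
    have hsub := (integral_comp_rpow_Ioi
      (fun y => y ^ (-(α*μ)-α-1) * Real.exp (-((lam + s^α) * y ^ (-α)))) hp2).symm
    rw [hsub, setIntegral_congr_fun measurableSet_Ioi hptwise, integral_const_mul,
      Real.integral_rpow_mul_exp_neg_mul_Ioi (by linarith : (0:ℝ) < μ+1) hc']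
  -- measurability of P
  have hΨ_meas : Measurable Ψ := by
    rw [hΨdef]
    fun_prop
  have hPmeas : AEStronglyMeasurable (Function.uncurry P)
      ((volume.restrict (Ioi (0:ℝ))).prod (volume.restrict (Ioi (0:ℝ)))) := by
    have hm : Measurable (Function.uncurry P) := by
      rw [hPdef]
      apply Measurable.mul
      · apply Measurable.mul
        · exact (measurable_exp.comp ((measurable_fst.const_mul s).neg)).mul measurable_fst
        · exact hg'_meas.comp (measurable_fst.mul measurable_snd)
      · exact hΨ_meas.comp measurable_snd
    exact hm.aestronglyMeasurable
  have hPnonneg : ∀ x ∈ Ioi (0:ℝ), ∀ y ∈ Ioi (0:ℝ), 0 ≤ P x y := by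
    intro x hx y hy
    have hx' : (0:ℝ) < x := hx
    exact mul_nonneg (mul_nonneg (mul_nonneg (Real.exp_pos _).le hx'.le)
      (hg'_nonneg _)) (hΨ_nonneg y hy)
  -- Fubini integrability
  have hPint : Integrable (Function.uncurry P)
      ((volume.restrict (Ioi (0:ℝ))).prod (volume.restrict (Ioi (0:ℝ)))) := by
    rw [integrable_prod_iff' hPmeas]
    constructor
    · filter_upwards [ae_restrict_mem measurableSet_Ioi] with y hy
      have hy' : (0:ℝ) < y := hy
      have h := (hcore_int y hy').mul_const (Ψ y)
      exact h
    · apply Integrable.congr (hGint.const_mul K)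
      filter_upwards [ae_restrict_mem measurableSet_Ioi] with y hy
      have hy' : (0:ℝ) < y := hy
      have h1 : (∫ x in Ioi (0:ℝ), ‖P x y‖) = ∫ x in Ioi (0:ℝ), P x y := by
        apply integral_congr_ae
        filter_upwards [ae_restrict_mem measurableSet_Ioi] with x hx
        exact Real.norm_of_nonneg (hPnonneg x hx y hy)
      have h2 : (∫ x in Ioi (0:ℝ), P x y)
          = K * (y ^ (-(α*μ)-α-1) * Real.exp (-((lam + s^α) * y ^ (-α)))) := by
        have h0 : (∫ x in Ioi (0:ℝ), P x y)
            = (∫ x in Ioi (0:ℝ), Real.exp (-(s*x)) * x * g' (x*y)) * Ψ y := by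
          simp only [hPdef]
          rw [integral_mul_const]
        rw [h0, hcompute_x y hy', halg y hy']
      exact (h1.trans h2).symm
  -- Step 1+2: rewrite the outer integrand
  have step12 : ∀ x ∈ Ioi (0:ℝ),
      Real.exp (-(s * x)) * (x * (C *
        ∫ t in Ioi (0:ℝ), f (x * t ^ (-(1 / α))) * t ^ (-(1 / α)) * t ^ (μ - 1) *
          Real.exp (-(lam * t))))
      = ∫ y in Ioi (0:ℝ), P x y := by
    intro x hx
    have hx' : (0:ℝ) < x := hx
    have hsub : (∫ t in Ioi (0:ℝ), f (x * t ^ (-(1 / α))) * t ^ (-(1 / α)) * t ^ (μ - 1) *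
          Real.exp (-(lam * t)))
        = ∫ y in Ioi (0:ℝ), (|(-α)| * y ^ (-α - 1)) •
            (f (x * (y^(-α)) ^ (-(1/α))) * (y^(-α)) ^ (-(1/α)) * (y^(-α)) ^ (μ-1) *
              Real.exp (-(lam * y^(-α)))) :=
      (integral_comp_rpow_Ioi
        (fun t => f (x * t ^ (-(1/α))) * t ^ (-(1/α)) * t ^ (μ-1) *
          Real.exp (-(lam * t))) (neg_ne_zero.mpr hα.ne')).symm
    rw [hsub, ← integral_const_mul, ← integral_const_mul, ← integral_const_mul]
    apply integral_congr_ae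
    filter_upwards [hpre x hx', ae_restrict_mem measurableSet_Ioi] with y h1 h2
    have hy : (0:ℝ) < y := h2
    have hyx : (y^(-α)) ^ (-(1/α)) = y := by
      rw [← Real.rpow_mul hy.le]
      rw [show (-α) * (-(1/α)) = 1 by field_simp]
      exact Real.rpow_one y
    have hyb : (y^(-α)) ^ (μ-1) = y ^ (-α*(μ-1)) := (Real.rpow_mul hy.le _ _).symm
    have habs : |(-α)| = α := by rw [abs_neg, abs_of_pos hα]
    have hpow : y ^ (-α-1) * y * y^(-α*(μ-1)) = y ^ (-(α*μ)) := by
      calc y ^ (-α-1) * y * y^(-α*(μ-1)) = y ^ (-α-1) * y^(-α*(μ-1)) * y := by ring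
        _ = y ^ ((-α-1) + (-α*(μ-1))) * y := by rw [← Real.rpow_add hy]
        _ = y ^ ((-α-1) + (-α*(μ-1)) + 1) := by rw [Real.rpow_add_one hy.ne']
        _ = y ^ (-(α*μ)) := by congr 1; ring
    rw [hyx, hyb, habs, smul_eq_mul, h1]
    simp only [hPdef, hΨdef]
    rw [← hpow]
    ring
  have hinner : ∀ y ∈ Ioi (0:ℝ), (∫ x in Ioi (0:ℝ), P x y)
      = K * (y ^ (-(α*μ)-α-1) * Real.exp (-((lam + s^α) * y ^ (-α)))) := by
    intro y hy
    have hy' : (0:ℝ) < y := hy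
    have h0 : (∫ x in Ioi (0:ℝ), P x y)
        = (∫ x in Ioi (0:ℝ), Real.exp (-(s*x)) * x * g' (x*y)) * Ψ y := by
      simp only [hPdef]
      rw [integral_mul_const]
    rw [h0, hcompute_x y hy', halg y hy']
  -- final assembly
  rw [setIntegral_congr_fun measurableSet_Ioi step12,
    integral_integral_swap hPint,
    setIntegral_congr_fun measurableSet_Ioi hinner,
    integral_const_mul, hGval, hKdef, hCdef,
    Real.Gamma_add_one hμ.ne', one_div, Real.inv_rpow hc'.le]
  field_simp
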